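/- Let T ∈ (0,∞), let θ be a partition of [0,T], let (Ω,F,P) be a probability space, and let (E,‖·‖_E) be a real Banach space. Then for all p ∈ [1,∞), β ∈ [0,1], γ ∈ [β,1] and all strongly measurable stochastic processes X, Y : [0,T]×Ω → E it holds that ‖X − [Y]_θ‖_{C^β([0,T];L^p)} ≤ (2·(d_max(θ))^{1−β}/d_min(θ) + 1) · sup_{t∈θ} ‖X_t − Y_t‖_{L^p(P;E)} + (2·(d_max(θ))^{−β} + 2^{−γ}) · (d_max(θ))^γ · |X|_{C^γ([0,T];L^p)} (in [0,∞]), where [Y]_θ denotes the process obtained by piecewise affine linear interpolation of the sample paths of Y at the nodes of θ. -/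

import Mathlib

open MeasureTheory ENNReal

/-- Hölder seminorm in time of a stochastic process, measured in `L^p(P;E)`. -/
noncomputable def lpHolderSemi {Ω E : Type} [MeasurableSpace Ω] [NormedAddCommGroup E]
    (P : MeasureTheory.Measure Ω) (T p r : ℝ) (X : ℝ → Ω → E) : ℝ≥0∞ :=
  ⨆ (s : ℝ) (t : ℝ) (_ : s ∈ Set.Icc (0:ℝ) T) (_ : t ∈ Set.Icc (0:ℝ) T)
    (_ : s ≠ t),
    MeasureTheory.eLpNorm (fun ω => X s ω - X t ω) (ENNReal.ofReal p) P
      / ENNReal.ofReal (|s - t| ^ r)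

/-- Supremum in time of the `L^p(P;E)`-norms of a stochastic process. -/
noncomputable def lpSupNorm {Ω E : Type} [MeasurableSpace Ω] [NormedAddCommGroup E]
    (P : MeasureTheory.Measure Ω) (T p : ℝ) (X : ℝ → Ω → E) : ℝ≥0∞ :=
  ⨆ (t : ℝ) (_ : t ∈ Set.Icc (0:ℝ) T),
    MeasureTheory.eLpNorm (X t) (ENNReal.ofReal p) P

/-- Hölder norm in time of a stochastic process, measured in `L^p(P;E)`. -/
noncomputable def lpHolderNorm {Ω E : Type} [MeasurableSpace Ω] [NormedAddCommGroup E]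
    (P : MeasureTheory.Measure Ω) (T p r : ℝ) (X : ℝ → Ω → E) : ℝ≥0∞ :=
  lpSupNorm P T p X + lpHolderSemi P T p r X

/-- Maximal mesh size of the partition with nodes `θ 0 < θ 1 < … < θ K`. -/
noncomputable def dMax (K : ℕ) (θ : ℕ → ℝ) : ℝ := ⨆ j : Fin K, (θ (j + 1) - θ j)

/-- Minimal mesh size of the partition with nodes `θ 0 < θ 1 < … < θ K`. -/
noncomputable def dMin (K : ℕ) (θ : ℕ → ℝ) : ℝ := ⨅ j : Fin K, (θ (j + 1) - θ j)

section AuxLemmas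

private lemma jensen2 {r w₁ w₂ a c : ℝ} (hr0 : 0 ≤ r) (hr1 : r ≤ 1)
    (hw₁ : 0 ≤ w₁) (hw₂ : 0 ≤ w₂) (hw : w₁ + w₂ = 1)
    (ha : 0 ≤ a) (hc : 0 ≤ c) :
    w₁ * a ^ r + w₂ * c ^ r ≤ (w₁ * a + w₂ * c) ^ r := by
  rcases eq_or_lt_of_le hr0 with h0 | h0
  · simp only [← h0, Real.rpow_zero, mul_one, hw, le_refl]
  · have key := Real.arith_mean_le_rpow_mean (Finset.univ : Finset (Fin 2))
      ![w₁, w₂] ![a ^ r, c ^ r]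
      (by intro i _; fin_cases i <;> simpa)
      (by simp [Fin.sum_univ_two, hw])
      (by intro i _; fin_cases i <;> simp [Real.rpow_nonneg, ha, hc])
      (p := 1 / r)
      (by rw [le_div_iff₀ h0, one_mul]; exact hr1)
    simp only [Fin.sum_univ_two, Matrix.cons_val_zero, Matrix.cons_val_one,
      Matrix.head_cons] at key
    have har : (a ^ r) ^ (1 / r) = a := by
      rw [← Real.rpow_mul ha, mul_one_div, div_self h0.ne', Real.rpow_one]
    have hcr : (c ^ r) ^ (1 / r) = c := by
      rw [← Real.rpow_mul hc, mul_one_div, div_self h0.ne', Real.rpow_one]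
    have h1r : 1 / (1 / r) = r := by field_simp
    rwa [har, hcr, h1r] at key

private lemma two_rpow_le {r x y : ℝ} (hr0 : 0 ≤ r) (hr1 : r ≤ 1) (hx : 0 ≤ x) (hy : 0 ≤ y) :
    x ^ r + y ^ r ≤ 2 ^ (1 - r) * (x + y) ^ r := by
  have h := jensen2 (r := r) (w₁ := 1/2) (w₂ := 1/2) (a := x) (c := y)
    hr0 hr1 (by norm_num) (by norm_num) (by norm_num) hx hy
  have h2 : ((1:ℝ)/2 * x + 1/2 * y) ^ r = (x + y) ^ r / 2 ^ r := by
    rw [show (1:ℝ)/2 * x + 1/2 * y = (x + y)/2 by ring,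
      Real.div_rpow (by linarith) (by norm_num)]
  rw [h2] at h
  have h3 : (2:ℝ) ^ (1 - r) = 2 / 2 ^ r := by
    rw [Real.rpow_sub (by norm_num), Real.rpow_one]
  rw [h3]
  have h2r : (0:ℝ) < 2 ^ r := Real.rpow_pos_of_pos (by norm_num) r
  rw [div_mul_eq_mul_div, le_div_iff₀ h2r]
  rw [le_div_iff₀ h2r] at h
  nlinarith [Real.rpow_nonneg (by linarith : (0:ℝ) ≤ x + y) r]

private lemma coreR {γ a c Δ : ℝ} (hγ0 : 0 ≤ γ) (hγ1 : γ ≤ 1) (ha : 0 ≤ a) (hc : 0 ≤ c)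
    (hsum : a + c = Δ) (hΔpos : 0 < Δ) :
    c / Δ * a ^ γ + a / Δ * c ^ γ ≤ (2 * a * c / Δ) ^ γ := by
  have h := jensen2 (r := γ) (w₁ := c/Δ) (w₂ := a/Δ) (a := a) (c := c) hγ0 hγ1
    (by positivity) (by positivity) (by field_simp; linarith) ha hc
  have he : c / Δ * a + a / Δ * c = 2 * a * c / Δ := by ring
  rwa [he] at h

private lemma auxR1 {γ a c Δ δ : ℝ} (hγ0 : 0 ≤ γ) (hγ1 : γ ≤ 1) (ha : 0 ≤ a) (hc : 0 ≤ c)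
    (hsum : a + c = Δ) (hΔpos : 0 < Δ) (hΔδ : Δ ≤ δ) :
    c / Δ * a ^ γ + a / Δ * c ^ γ ≤ 2 ^ (-γ) * δ ^ γ := by
  refine (coreR hγ0 hγ1 ha hc hsum hΔpos).trans ?_
  have h1 : 2 * a * c / Δ ≤ δ / 2 := by
    rw [div_le_div_iff₀ hΔpos (by norm_num)]
    nlinarith [sq_nonneg (a - c), mul_le_mul_of_nonneg_right hΔδ hΔpos.le]
  have h2 : (0:ℝ) ≤ 2 * a * c / Δ := by positivity
  calc (2 * a * c / Δ) ^ γ ≤ (δ / 2) ^ γ := Real.rpow_le_rpow h2 h1 hγ0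
    _ = 2 ^ (-γ) * δ ^ γ := by
        rw [Real.div_rpow (by linarith) (by norm_num), Real.rpow_neg (by norm_num)]
        ring

private lemma rpow_le_rpow_mul {β γ δ : ℝ} (hβ0 : 0 ≤ β) (hβγ : β ≤ γ) (hδ : 0 < δ) :
    ∀ x : ℝ, 0 ≤ x → x ≤ δ → x ^ γ ≤ x ^ β * δ ^ (γ - β) := by
  intro x hx hxδ
  rcases hx.eq_or_lt with h | h
  · rcases eq_or_lt_of_le (hβ0.trans hβγ) with hγ0' | hγ0'
    · have hg : γ = 0 := hγ0'.symm
      have hb : β = 0 := le_antisymm (hβγ.trans_eq hg) hβ0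
      simp [hg, hb]
    · rw [← h, Real.zero_rpow hγ0'.ne']
      positivity
  · have hxg : x ^ γ = x ^ β * x ^ (γ - β) := by
      rw [← Real.rpow_add h]; ring_nf
    rw [hxg]
    exact mul_le_mul_of_nonneg_left
      (Real.rpow_le_rpow hx hxδ (by linarith)) (Real.rpow_nonneg hx β)

private lemma auxR2 {β γ a c Δ δ : ℝ} (hβ0 : 0 ≤ β) (hβγ : β ≤ γ) (hγ1 : γ ≤ 1)
    (ha : 0 ≤ a) (hc : 0 ≤ c) (hsum : a + c = Δ) (hΔpos : 0 < Δ) (hΔδ : Δ ≤ δ) :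
    c / Δ * a ^ γ + a / Δ * c ^ γ ≤ δ ^ (γ - β) * (2 * a) ^ β := by
  have hδ : 0 < δ := lt_of_lt_of_le hΔpos hΔδ
  have haδ : a ≤ δ := by linarith
  have hcδ : c ≤ δ := by linarith
  calc c / Δ * a ^ γ + a / Δ * c ^ γ
      ≤ c / Δ * (a ^ β * δ ^ (γ - β)) + a / Δ * (c ^ β * δ ^ (γ - β)) := by
        refine add_le_add ?_ ?_
        · exact mul_le_mul_of_nonneg_left (rpow_le_rpow_mul hβ0 hβγ hδ a ha haδ)
            (by positivity)
        · exact mul_le_mul_of_nonneg_left (rpow_le_rpow_mul hβ0 hβγ hδ c hc hcδ)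
            (by positivity)
    _ = δ ^ (γ - β) * (c / Δ * a ^ β + a / Δ * c ^ β) := by ring
    _ ≤ δ ^ (γ - β) * (2 * a * c / Δ) ^ β :=
        mul_le_mul_of_nonneg_left
          (coreR hβ0 (hβγ.trans hγ1) ha hc hsum hΔpos) (by positivity)
    _ ≤ δ ^ (γ - β) * (2 * a) ^ β := by
        refine mul_le_mul_of_nonneg_left
          (Real.rpow_le_rpow (by positivity) ?_ hβ0) (by positivity)
        rw [div_le_iff₀ hΔpos]
        nlinarith

private lemma auxR3 {γ e Δ : ℝ} (hγ1 : γ ≤ 1) (he : 0 ≤ e) (heΔ : e ≤ Δ)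
    (hΔ : 0 < Δ) : e / Δ * Δ ^ γ ≤ e ^ γ := by
  rcases he.eq_or_lt with h | h
  · rw [← h]
    simp only [zero_div, zero_mul]
    positivity
  · have h1 : e / Δ * Δ ^ γ = e * Δ ^ (γ - 1) := by
      rw [Real.rpow_sub hΔ, Real.rpow_one]; ring
    rw [h1]
    have h2 : Δ ^ (γ - 1) ≤ e ^ (γ - 1) :=
      Real.rpow_le_rpow_of_nonpos h heΔ (by linarith)
    calc e * Δ ^ (γ - 1) ≤ e * e ^ (γ - 1) := mul_le_mul_of_nonneg_left h2 he
      _ = e ^ (1 + (γ - 1)) := by rw [Real.rpow_add h, Real.rpow_one]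
      _ = e ^ γ := by ring_nf

end AuxLemmas

set_option maxHeartbeats 2000000 in
/-- **Corollary 2.9 (i)** (piecewise affine linear stochastic processes): the
Hölder-in-time `L^p`-distance of a stochastic process `X` to the process `Z`
obtained by pathwise piecewise affine linear interpolation of a process `Y`
at the nodes of a partition is controlled by the distance of `X` and `Y` at
the nodes plus a mesh-size term. -/
theorem cor_hoelder2_i
    {Ω E : Type} [MeasurableSpace Ω] [NormedAddCommGroup E] [NormedSpace ℝ E]
    [CompleteSpace E]
    (T : ℝ) (hT : 0 < T)
    (K : ℕ) (hK : 1 ≤ K) (θ : ℕ → ℝ)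
    (hθ0 : θ 0 = 0) (hθK : θ K = T)
    (hθmono : ∀ j, j < K → θ j < θ (j + 1))
    (P : Measure Ω) [IsProbabilityMeasure P]
    (p β γ : ℝ) (hp : 1 ≤ p) (hβ : β ∈ Set.Icc (0:ℝ) 1) (hγ : γ ∈ Set.Icc β 1)
    (X Y Z : ℝ → Ω → E)
    (hXmeas : ∀ t ∈ Set.Icc (0:ℝ) T, StronglyMeasurable (X t))
    (hYmeas : ∀ t ∈ Set.Icc (0:ℝ) T, StronglyMeasurable (Y t))
    (hZ : ∀ ω, ∀ j, j < K → ∀ s ∈ Set.Icc (θ j) (θ (j + 1)),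
        Z s ω = ((θ (j + 1) - s) / (θ (j + 1) - θ j)) • Y (θ j) ω
            + ((s - θ j) / (θ (j + 1) - θ j)) • Y (θ (j + 1)) ω) :
    lpHolderNorm P T p β (fun t ω => X t ω - Z t ω)
      ≤ ENNReal.ofReal (2 * (dMax K θ) ^ (1 - β) / dMin K θ + 1) *
          (⨆ j : Fin (K + 1),
              eLpNorm (fun ω => X (θ j) ω - Y (θ j) ω) (ENNReal.ofReal p) P)
        + ENNReal.ofReal ((2 * (dMax K θ) ^ (-β) + 2 ^ (-γ)) * (dMax K θ) ^ γ) *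
            lpHolderSemi P T p γ X := by
  classical
  obtain ⟨hβ0, hβ1⟩ := hβ
  obtain ⟨hγβ, hγ1⟩ := hγ
  have hγ0 : 0 ≤ γ := hβ0.trans hγβ
  set q : ℝ≥0∞ := ENNReal.ofReal p with hqdef
  have hq1 : 1 ≤ q := by
    rw [hqdef, ← ENNReal.ofReal_one]
    exact ENNReal.ofReal_le_ofReal hp
  set δ : ℝ := dMax K θ with hδdef
  set δ' : ℝ := dMin K θ with hδ'def
  set A : ℝ≥0∞ := ⨆ j : Fin (K + 1), eLpNorm (fun ω => X (θ j) ω - Y (θ j) ω) q P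
    with hAdef
  set H : ℝ≥0∞ := lpHolderSemi P T p γ X with hHdef
  -- monotonicity of the nodes
  have hmono : ∀ i j : ℕ, i ≤ j → j ≤ K → θ i ≤ θ j := by
    intro i j hij
    induction j, hij using Nat.le_induction with
    | base => intro _; exact le_rfl
    | succ n hin ih =>
      intro hnK
      exact (ih (by omega)).trans (le_of_lt (hθmono n (by omega)))
  have hstrict : ∀ i j : ℕ, i < j → j ≤ K → θ i < θ j := by
    intro i j hij hjK
    exact lt_of_lt_of_le (hθmono i (by omega)) (hmono (i+1) j hij hjK)
  have hθ0T : ∀ m : ℕ, m ≤ K → θ m ∈ Set.Icc (0:ℝ) T := by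
    intro m hm
    constructor
    · rw [← hθ0]; exact hmono 0 m (Nat.zero_le m) hm
    · rw [← hθK]; exact hmono m K hm le_rfl
  have hΔpos : ∀ j, j < K → 0 < θ (j+1) - θ j := fun j hj => sub_pos.mpr (hθmono j hj)
  have hΔle : ∀ j, j < K → θ (j+1) - θ j ≤ δ := by
    intro j hj
    rw [hδdef, dMax]
    exact le_ciSup (f := fun i : Fin K => θ (↑i + 1) - θ ↑i) (Set.Finite.bddAbove (Set.finite_range _)) (⟨j, hj⟩ : Fin K)
  have hδ'le : ∀ j, j < K → δ' ≤ θ (j+1) - θ j := by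
    intro j hj
    rw [hδ'def, dMin]
    exact ciInf_le (f := fun i : Fin K => θ (↑i + 1) - θ ↑i) (Set.Finite.bddBelow (Set.finite_range _)) (⟨j, hj⟩ : Fin K)
  have hδ'pos : 0 < δ' := by
    have hne : Nonempty (Fin K) := ⟨⟨0, hK⟩⟩
    obtain ⟨j₀, hj₀⟩ := Finite.exists_min (fun i : Fin K => θ (↑i + 1) - θ ↑i)
    calc (0:ℝ) < θ (↑j₀ + 1) - θ ↑j₀ := hΔpos _ j₀.isLt
      _ ≤ δ' := by rw [hδ'def, dMin]; exact le_ciInf hj₀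
  have hδpos : 0 < δ := lt_of_lt_of_le (hΔpos 0 hK) (hΔle 0 hK)
  have hδ'δ : δ' ≤ δ := (hδ'le 0 hK).trans (hΔle 0 hK)
  -- covering of [0,T] by partition intervals
  have cover : ∀ t : ℝ, t ∈ Set.Icc (0:ℝ) T → ∃ j, j < K ∧ θ j ≤ t ∧ t ≤ θ (j+1) := by
    intro t ht
    have hP0 : θ 0 ≤ t := by rw [hθ0]; exact ht.1
    have hJle : Nat.findGreatest (fun i => θ i ≤ t) (K-1) ≤ K - 1 :=
      Nat.findGreatest_le _
    have hJspec : θ (Nat.findGreatest (fun i => θ i ≤ t) (K-1)) ≤ t :=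
      Nat.findGreatest_spec (P := fun i => θ i ≤ t) (Nat.zero_le _) hP0
    have hJK : Nat.findGreatest (fun i => θ i ≤ t) (K-1) < K :=
      lt_of_le_of_lt hJle (by omega : K - 1 < K)
    refine ⟨Nat.findGreatest (fun i => θ i ≤ t) (K-1), hJK, hJspec, ?_⟩
    rcases eq_or_lt_of_le hJle with h | h
    · rw [h, show K - 1 + 1 = K by omega, hθK]
      exact ht.2
    · by_contra hcon
      push_neg at hcon
      have hgr := Nat.findGreatest_is_greatest (P := fun i => θ i ≤ t) (n := K - 1)
        (Nat.lt_succ_self _) (by omega)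
      exact hgr hcon.le
  -- agreement of interpolation formulas on overlaps
  have hagree : ∀ (g : ℕ → E) (i j : ℕ), i < K → j < K → ∀ t : ℝ,
      t ∈ Set.Icc (θ i) (θ (i+1)) → t ∈ Set.Icc (θ j) (θ (j+1)) →
      ((θ (i+1) - t) / (θ (i+1) - θ i)) • g i + ((t - θ i) / (θ (i+1) - θ i)) • g (i+1)
        = ((θ (j+1) - t) / (θ (j+1) - θ j)) • g j
          + ((t - θ j) / (θ (j+1) - θ j)) • g (j+1) := by
    have main : ∀ (g : ℕ → E) (i j : ℕ), i < K → j < K → i ≤ j → ∀ t : ℝ,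
        t ∈ Set.Icc (θ i) (θ (i+1)) → t ∈ Set.Icc (θ j) (θ (j+1)) →
        ((θ (i+1) - t) / (θ (i+1) - θ i)) • g i + ((t - θ i) / (θ (i+1) - θ i)) • g (i+1)
          = ((θ (j+1) - t) / (θ (j+1) - θ j)) • g j
            + ((t - θ j) / (θ (j+1) - θ j)) • g (j+1) := by
      intro g i j hi hj hij t hti htj
      rcases eq_or_lt_of_le hij with heq | hlt
      · subst heq; rfl
      · have h1 : θ (i+1) ≤ θ j := hmono (i+1) j hlt (le_of_lt hj)
        have ht1 : t = θ (i+1) := le_antisymm hti.2 (le_trans h1 htj.1)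
        have ht2 : θ j = t := le_antisymm htj.1 (by rw [ht1]; exact h1)
        have hij1 : i + 1 = j := by
          by_contra hne
          have hlt2 : i + 1 < j := by omega
          have hcon := hstrict (i+1) j hlt2 (le_of_lt hj)
          rw [← ht1, ht2] at hcon
          exact lt_irrefl t hcon
        subst hij1
        have d1 : θ (i+1) - θ i ≠ 0 := (hΔpos i hi).ne'
        have d2 : θ (i+1+1) - θ (i+1) ≠ 0 := (hΔpos (i+1) hj).ne'
        rw [ht1]
        simp [sub_self, div_self d1, div_self d2]
    intro g i j hi hj t hti htj
    rcases le_total i j with h | h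
    · exact main g i j hi hj h t hti htj
    · exact (main g j i hj hi h t htj hti).symm
  -- the pathwise piecewise affine interpolation of X
  set W : ℝ → Ω → E := fun t ω =>
    if ht : t ∈ Set.Icc (0:ℝ) T then
      ((θ ((cover t ht).choose + 1) - t) /
          (θ ((cover t ht).choose + 1) - θ ((cover t ht).choose))) •
        X (θ ((cover t ht).choose)) ω
      + ((t - θ ((cover t ht).choose)) /
          (θ ((cover t ht).choose + 1) - θ ((cover t ht).choose))) •
        X (θ ((cover t ht).choose + 1)) ω
    else 0 with hWdef
  have hmemT : ∀ j, j < K → ∀ t : ℝ, t ∈ Set.Icc (θ j) (θ (j+1)) →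
      t ∈ Set.Icc (0:ℝ) T := by
    intro j hj t ht
    exact ⟨le_trans (hθ0T j (le_of_lt hj)).1 ht.1, le_trans ht.2 (hθ0T (j+1) hj).2⟩
  have hW_eq : ∀ j, j < K → ∀ t ∈ Set.Icc (θ j) (θ (j+1)), ∀ ω : Ω,
      W t ω = ((θ (j+1) - t) / (θ (j+1) - θ j)) • X (θ j) ω
        + ((t - θ j) / (θ (j+1) - θ j)) • X (θ (j+1)) ω := by
    intro j hj t ht ω
    have htT : t ∈ Set.Icc (0:ℝ) T := hmemT j hj t ht
    rw [hWdef]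
    simp only [dif_pos htT]
    obtain ⟨hjK', h1, h2⟩ := (cover t htT).choose_spec
    exact hagree (fun m => X (θ m) ω) _ j hjK' hj t ⟨h1, h2⟩ ht
  have hWnode : ∀ m : ℕ, m ≤ K → ∀ ω : Ω, W (θ m) ω = X (θ m) ω := by
    intro m hm ω
    rcases lt_or_eq_of_le hm with hmK | hmK
    · rw [hW_eq m hmK (θ m) ⟨le_rfl, (hθmono m hmK).le⟩ ω]
      have d : θ (m+1) - θ m ≠ 0 := (hΔpos m hmK).ne'
      simp [sub_self, div_self d]
    · subst hmK
      have e : m - 1 + 1 = m := by omega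
      rw [← e, hW_eq (m-1) (by omega) (θ (m-1+1))
        ⟨(hθmono (m-1) (by omega)).le, le_rfl⟩ ω]
      have d : θ (m-1+1) - θ (m-1) ≠ 0 := (hΔpos (m-1) (by omega)).ne'
      simp [sub_self, div_self d]
  have hZnode : ∀ m : ℕ, m ≤ K → ∀ ω : Ω, Z (θ m) ω = Y (θ m) ω := by
    intro m hm ω
    rcases lt_or_eq_of_le hm with hmK | hmK
    · rw [hZ ω m hmK (θ m) ⟨le_rfl, (hθmono m hmK).le⟩]
      have d : θ (m+1) - θ m ≠ 0 := (hΔpos m hmK).ne'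
      simp [sub_self, div_self d]
    · subst hmK
      have e : m - 1 + 1 = m := by omega
      rw [← e, hZ ω (m-1) (by omega) (θ (m-1+1))
        ⟨(hθmono (m-1) (by omega)).le, le_rfl⟩]
      have d : θ (m-1+1) - θ (m-1) ≠ 0 := (hΔpos (m-1) (by omega)).ne'
      simp [sub_self, div_self d]
  -- measurability
  have smW : ∀ t : ℝ, StronglyMeasurable (W t) := by
    intro t
    rw [hWdef]
    by_cases ht : t ∈ Set.Icc (0:ℝ) T
    · simp only [dif_pos ht]
      have hjK := (cover t ht).choose_spec.1
      have h1 := hXmeas (θ ((cover t ht).choose)) (hθ0T _ (by omega))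
      have h2 := hXmeas (θ ((cover t ht).choose + 1)) (hθ0T _ (by omega))
      exact (h1.const_smul _).add (h2.const_smul _)
    · simp only [dif_neg ht]
      exact stronglyMeasurable_const
  have smZ : ∀ t : ℝ, t ∈ Set.Icc (0:ℝ) T → StronglyMeasurable (Z t) := by
    intro t ht
    obtain ⟨j, hj, h1, h2⟩ := cover t ht
    have he : Z t = fun ω => ((θ (j+1) - t) / (θ (j+1) - θ j)) • Y (θ j) ω
        + ((t - θ j) / (θ (j+1) - θ j)) • Y (θ (j+1)) ω :=
      funext fun ω => hZ ω j hj t ⟨h1, h2⟩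
    rw [he]
    have h1' := hYmeas (θ j) (hθ0T _ (le_of_lt hj))
    have h2' := hYmeas (θ (j+1)) (hθ0T _ hj)
    exact (h1'.const_smul _).add (h2'.const_smul _)
  have smG : ∀ t : ℝ, t ∈ Set.Icc (0:ℝ) T →
      StronglyMeasurable (fun ω => X t ω - W t ω) :=
    fun t ht => (hXmeas t ht).sub (smW t)
  have smV : ∀ t : ℝ, t ∈ Set.Icc (0:ℝ) T →
      StronglyMeasurable (fun ω => W t ω - Z t ω) :=
    fun t ht => (smW t).sub (smZ t ht)
  -- Hölder bound for X between two times
  have HX : ∀ s ∈ Set.Icc (0:ℝ) T, ∀ t ∈ Set.Icc (0:ℝ) T,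
      eLpNorm (fun ω => X s ω - X t ω) q P ≤ H * ENNReal.ofReal (|s - t| ^ γ) := by
    intro s hs t ht
    by_cases hst : s = t
    · subst hst
      simp only [sub_self]
      rw [show (fun _ : Ω => (0:E)) = (0 : Ω → E) from rfl, eLpNorm_zero]
      exact zero_le
    · have hterm : eLpNorm (fun ω => X s ω - X t ω) q P / ENNReal.ofReal (|s - t| ^ γ)
          ≤ H := by
        rw [hHdef]
        unfold lpHolderSemi
        rw [← hqdef]
        exact le_iSup_of_le s (le_iSup_of_le t (le_iSup_of_le hs
          (le_iSup_of_le ht (le_iSup_of_le hst le_rfl))))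
      have hb0 : ENNReal.ofReal (|s - t| ^ γ) ≠ 0 := by
        rw [ne_eq, ENNReal.ofReal_eq_zero, not_le]
        exact Real.rpow_pos_of_pos (abs_pos.mpr (sub_ne_zero.mpr hst)) γ
      calc eLpNorm (fun ω => X s ω - X t ω) q P
          = eLpNorm (fun ω => X s ω - X t ω) q P / ENNReal.ofReal (|s - t| ^ γ)
            * ENNReal.ofReal (|s - t| ^ γ) :=
            (ENNReal.div_mul_cancel hb0 ENNReal.ofReal_ne_top).symm
        _ ≤ H * ENNReal.ofReal (|s - t| ^ γ) := mul_le_mul_left hterm _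
  -- node values bound
  have hA : ∀ m : ℕ, m ≤ K →
      eLpNorm (fun ω => X (θ m) ω - Y (θ m) ω) q P ≤ A := by
    intro m hm
    rw [hAdef]
    exact le_iSup_of_le (⟨m, by omega⟩ : Fin (K+1)) le_rfl
  -- pointwise interpolation-error bound
  have Ecore : ∀ j, j < K → ∀ t ∈ Set.Icc (θ j) (θ (j+1)),
      eLpNorm (fun ω => X t ω - W t ω) q P
        ≤ H * ENNReal.ofReal ((θ (j+1) - t) / (θ (j+1) - θ j) * (t - θ j) ^ γ
            + (t - θ j) / (θ (j+1) - θ j) * (θ (j+1) - t) ^ γ) := by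
    intro j hj t ht
    have htT : t ∈ Set.Icc (0:ℝ) T := hmemT j hj t ht
    have hΔp : 0 < θ (j+1) - θ j := hΔpos j hj
    have hl0 : 0 ≤ (θ (j+1) - t) / (θ (j+1) - θ j) :=
      div_nonneg (sub_nonneg.mpr ht.2) hΔp.le
    have hm0 : 0 ≤ (t - θ j) / (θ (j+1) - θ j) :=
      div_nonneg (sub_nonneg.mpr ht.1) hΔp.le
    have hsum1 : (θ (j+1) - t) / (θ (j+1) - θ j) + (t - θ j) / (θ (j+1) - θ j) = 1 := by
      rw [← add_div, show θ (j+1) - t + (t - θ j) = θ (j+1) - θ j from by ring,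
        div_self hΔp.ne']
    have hGt : (fun ω => X t ω - W t ω)
        = (fun ω => ((θ (j+1) - t) / (θ (j+1) - θ j)) • (X t ω - X (θ j) ω))
          + (fun ω => ((t - θ j) / (θ (j+1) - θ j)) • (X t ω - X (θ (j+1)) ω)) := by
      funext ω
      simp only [Pi.add_apply]
      rw [hW_eq j hj t ht ω, smul_sub, smul_sub,
        show ((θ (j+1) - t) / (θ (j+1) - θ j)) • X t ω
            - ((θ (j+1) - t) / (θ (j+1) - θ j)) • X (θ j) ω
            + (((t - θ j) / (θ (j+1) - θ j)) • X t ω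
              - ((t - θ j) / (θ (j+1) - θ j)) • X (θ (j+1)) ω)
          = (((θ (j+1) - t) / (θ (j+1) - θ j)) • X t ω
              + ((t - θ j) / (θ (j+1) - θ j)) • X t ω)
            - (((θ (j+1) - t) / (θ (j+1) - θ j)) • X (θ j) ω
              + ((t - θ j) / (θ (j+1) - θ j)) • X (θ (j+1)) ω) from by abel,
        ← add_smul, hsum1, one_smul]
    rw [hGt]
    have hm1 : AEStronglyMeasurable
        (fun ω => ((θ (j+1) - t) / (θ (j+1) - θ j)) • (X t ω - X (θ j) ω)) P :=
      (((hXmeas t htT).sub (hXmeas _ (hθ0T j (le_of_lt hj)))).const_smul _).aestronglyMeasurable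
    have hm2 : AEStronglyMeasurable
        (fun ω => ((t - θ j) / (θ (j+1) - θ j)) • (X t ω - X (θ (j+1)) ω)) P :=
      (((hXmeas t htT).sub (hXmeas _ (hθ0T (j+1) hj))).const_smul _).aestronglyMeasurable
    refine (eLpNorm_add_le hm1 hm2 hq1).trans ?_
    have e1 : eLpNorm (fun ω => ((θ (j+1) - t) / (θ (j+1) - θ j)) • (X t ω - X (θ j) ω)) q P
        = ENNReal.ofReal ((θ (j+1) - t) / (θ (j+1) - θ j))
          * eLpNorm (fun ω => X t ω - X (θ j) ω) q P := by
      rw [show (fun ω => ((θ (j+1) - t) / (θ (j+1) - θ j)) • (X t ω - X (θ j) ω))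
          = ((θ (j+1) - t) / (θ (j+1) - θ j)) • (fun ω => X t ω - X (θ j) ω) from rfl,
        eLpNorm_const_smul, Real.enorm_eq_ofReal hl0]
    have e2 : eLpNorm (fun ω => ((t - θ j) / (θ (j+1) - θ j)) • (X t ω - X (θ (j+1)) ω)) q P
        = ENNReal.ofReal ((t - θ j) / (θ (j+1) - θ j))
          * eLpNorm (fun ω => X t ω - X (θ (j+1)) ω) q P := by
      rw [show (fun ω => ((t - θ j) / (θ (j+1) - θ j)) • (X t ω - X (θ (j+1)) ω))
          = ((t - θ j) / (θ (j+1) - θ j)) • (fun ω => X t ω - X (θ (j+1)) ω) from rfl,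
        eLpNorm_const_smul, Real.enorm_eq_ofReal hm0]
    rw [e1, e2]
    have b1 := HX t htT (θ j) (hθ0T j (le_of_lt hj))
    rw [abs_of_nonneg (sub_nonneg.mpr ht.1)] at b1
    have b2 := HX t htT (θ (j+1)) (hθ0T (j+1) hj)
    rw [abs_sub_comm, abs_of_nonneg (sub_nonneg.mpr ht.2)] at b2
    calc ENNReal.ofReal ((θ (j+1) - t) / (θ (j+1) - θ j))
          * eLpNorm (fun ω => X t ω - X (θ j) ω) q P
        + ENNReal.ofReal ((t - θ j) / (θ (j+1) - θ j))
          * eLpNorm (fun ω => X t ω - X (θ (j+1)) ω) q P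
        ≤ ENNReal.ofReal ((θ (j+1) - t) / (θ (j+1) - θ j))
            * (H * ENNReal.ofReal ((t - θ j) ^ γ))
          + ENNReal.ofReal ((t - θ j) / (θ (j+1) - θ j))
            * (H * ENNReal.ofReal ((θ (j+1) - t) ^ γ)) :=
          add_le_add (mul_le_mul_right b1 _) (mul_le_mul_right b2 _)
      _ = H * ENNReal.ofReal ((θ (j+1) - t) / (θ (j+1) - θ j) * (t - θ j) ^ γ
            + (t - θ j) / (θ (j+1) - θ j) * (θ (j+1) - t) ^ γ) := by
          rw [ENNReal.ofReal_add
              (mul_nonneg hl0 (Real.rpow_nonneg (sub_nonneg.mpr ht.1) γ))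
              (mul_nonneg hm0 (Real.rpow_nonneg (sub_nonneg.mpr ht.2) γ)),
            ENNReal.ofReal_mul hl0, ENNReal.ofReal_mul hm0]
          ring
  -- uniform bound on the interpolation error
  have E_Gbdd : ∀ t ∈ Set.Icc (0:ℝ) T,
      eLpNorm (fun ω => X t ω - W t ω) q P
        ≤ ENNReal.ofReal (2 ^ (-γ) * δ ^ γ) * H := by
    intro t ht
    obtain ⟨j, hj, h1, h2⟩ := cover t ht
    refine (Ecore j hj t ⟨h1, h2⟩).trans ?_
    rw [mul_comm]
    refine mul_le_mul_left (ENNReal.ofReal_le_ofReal ?_) H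
    exact auxR1 hγ0 hγ1 (sub_nonneg.mpr h1) (sub_nonneg.mpr h2) (by ring)
      (hΔpos j hj) (hΔle j hj)
  have E_Gpiece : ∀ j, j < K → ∀ t ∈ Set.Icc (θ j) (θ (j+1)),
      eLpNorm (fun ω => X t ω - W t ω) q P
        ≤ ENNReal.ofReal (δ ^ (γ-β) * (2 * (t - θ j)) ^ β) * H := by
    intro j hj t ht
    refine (Ecore j hj t ht).trans ?_
    rw [mul_comm]
    refine mul_le_mul_left (ENNReal.ofReal_le_ofReal ?_) H
    exact auxR2 hβ0 hγβ hγ1 (sub_nonneg.mpr ht.1) (sub_nonneg.mpr ht.2) (by ring)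
      (hΔpos j hj) (hΔle j hj)
  have E_Gpiece' : ∀ j, j < K → ∀ t ∈ Set.Icc (θ j) (θ (j+1)),
      eLpNorm (fun ω => X t ω - W t ω) q P
        ≤ ENNReal.ofReal (δ ^ (γ-β) * (2 * (θ (j+1) - t)) ^ β) * H := by
    intro j hj t ht
    refine (Ecore j hj t ht).trans ?_
    rw [mul_comm]
    refine mul_le_mul_left (ENNReal.ofReal_le_ofReal ?_) H
    have h := auxR2 (a := θ (j+1) - t) (c := t - θ j) hβ0 hγβ hγ1
      (sub_nonneg.mpr ht.2) (sub_nonneg.mpr ht.1) (by ring) (hΔpos j hj) (hΔle j hj)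
    linarith [h]
  -- same-interval increment bound for the interpolation error
  have E_Gsame : ∀ j, j < K → ∀ s t : ℝ, s ∈ Set.Icc (θ j) (θ (j+1)) →
      t ∈ Set.Icc (θ j) (θ (j+1)) → s ≤ t →
      eLpNorm (fun ω => (X t ω - W t ω) - (X s ω - W s ω)) q P
        ≤ ENNReal.ofReal (2 * (t - s) ^ γ) * H := by
    intro j hj s t hs ht hst
    have hsT := hmemT j hj s hs
    have htT := hmemT j hj t ht
    have hΔp := hΔpos j hj
    have hsplit : (fun ω => (X t ω - W t ω) - (X s ω - W s ω))
        = (fun ω => X t ω - X s ω)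
          + (fun ω => ((t - s) / (θ (j+1) - θ j)) • (X (θ j) ω - X (θ (j+1)) ω)) := by
      funext ω
      simp only [Pi.add_apply]
      rw [hW_eq j hj t ht ω, hW_eq j hj s hs ω]
      match_scalars <;> ring
    rw [hsplit]
    have hm1 : AEStronglyMeasurable (fun ω => X t ω - X s ω) P :=
      ((hXmeas t htT).sub (hXmeas s hsT)).aestronglyMeasurable
    have hm2 : AEStronglyMeasurable
        (fun ω => ((t - s) / (θ (j+1) - θ j)) • (X (θ j) ω - X (θ (j+1)) ω)) P :=
      (((hXmeas _ (hθ0T j (le_of_lt hj))).sub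
        (hXmeas _ (hθ0T (j+1) hj))).const_smul _).aestronglyMeasurable
    refine (eLpNorm_add_le hm1 hm2 hq1).trans ?_
    have hρ0 : 0 ≤ (t - s) / (θ (j+1) - θ j) := div_nonneg (by linarith) hΔp.le
    have e2 : eLpNorm (fun ω => ((t - s) / (θ (j+1) - θ j)) • (X (θ j) ω - X (θ (j+1)) ω)) q P
        = ENNReal.ofReal ((t - s) / (θ (j+1) - θ j))
          * eLpNorm (fun ω => X (θ j) ω - X (θ (j+1)) ω) q P := by
      rw [show (fun ω => ((t - s) / (θ (j+1) - θ j)) • (X (θ j) ω - X (θ (j+1)) ω))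
          = ((t - s) / (θ (j+1) - θ j)) • (fun ω => X (θ j) ω - X (θ (j+1)) ω) from rfl,
        eLpNorm_const_smul, Real.enorm_eq_ofReal hρ0]
    rw [e2]
    have b1 := HX t htT s hsT
    rw [abs_of_nonneg (by linarith : (0:ℝ) ≤ t - s)] at b1
    have b2 := HX (θ j) (hθ0T j (le_of_lt hj)) (θ (j+1)) (hθ0T (j+1) hj)
    rw [abs_sub_comm, abs_of_nonneg (by linarith : (0:ℝ) ≤ θ (j+1) - θ j)] at b2
    calc eLpNorm (fun ω => X t ω - X s ω) q P
          + ENNReal.ofReal ((t - s) / (θ (j+1) - θ j))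
            * eLpNorm (fun ω => X (θ j) ω - X (θ (j+1)) ω) q P
        ≤ H * ENNReal.ofReal ((t - s) ^ γ)
          + ENNReal.ofReal ((t - s) / (θ (j+1) - θ j))
            * (H * ENNReal.ofReal ((θ (j+1) - θ j) ^ γ)) :=
          add_le_add b1 (mul_le_mul_right b2 _)
      _ = H * ENNReal.ofReal ((t - s) ^ γ
            + (t - s) / (θ (j+1) - θ j) * (θ (j+1) - θ j) ^ γ) := by
          rw [ENNReal.ofReal_add (Real.rpow_nonneg (by linarith) γ)
              (mul_nonneg hρ0 (Real.rpow_nonneg hΔp.le γ)),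
            ENNReal.ofReal_mul hρ0]
          ring
      _ ≤ H * ENNReal.ofReal (2 * (t - s) ^ γ) := by
          refine mul_le_mul_right (ENNReal.ofReal_le_ofReal ?_) H
          have h3 := auxR3 (γ := γ) hγ1 (by linarith : (0:ℝ) ≤ t - s)
            (by linarith [hs.1, ht.2] : t - s ≤ θ (j+1) - θ j) hΔp
          linarith [h3]
      _ = ENNReal.ofReal (2 * (t - s) ^ γ) * H := mul_comm _ _
  -- same-interval increment bound for the affine part
  have E_Vsame : ∀ j, j < K → ∀ s t : ℝ, s ∈ Set.Icc (θ j) (θ (j+1)) →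
      t ∈ Set.Icc (θ j) (θ (j+1)) → s ≤ t →
      eLpNorm (fun ω => (W t ω - Z t ω) - (W s ω - Z s ω)) q P
        ≤ ENNReal.ofReal (2 * (t - s) / δ') * A := by
    intro j hj s t hs ht hst
    have hΔp := hΔpos j hj
    have hsplit : (fun ω => (W t ω - Z t ω) - (W s ω - Z s ω))
        = (fun ω => ((t - s) / (θ (j+1) - θ j)) •
            ((X (θ (j+1)) ω - Y (θ (j+1)) ω) - (X (θ j) ω - Y (θ j) ω))) := by
      funext ω
      rw [hW_eq j hj t ht ω, hW_eq j hj s hs ω, hZ ω j hj t ht, hZ ω j hj s hs]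
      match_scalars <;> ring
    rw [hsplit]
    have hρ0 : 0 ≤ (t - s) / (θ (j+1) - θ j) := div_nonneg (by linarith) hΔp.le
    rw [show (fun ω => ((t - s) / (θ (j+1) - θ j)) •
            ((X (θ (j+1)) ω - Y (θ (j+1)) ω) - (X (θ j) ω - Y (θ j) ω)))
        = ((t - s) / (θ (j+1) - θ j)) • (fun ω =>
            (X (θ (j+1)) ω - Y (θ (j+1)) ω) - (X (θ j) ω - Y (θ j) ω)) from rfl,
      eLpNorm_const_smul, Real.enorm_eq_ofReal hρ0]
    have hm1 : AEStronglyMeasurable (fun ω => X (θ (j+1)) ω - Y (θ (j+1)) ω) P :=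
      ((hXmeas _ (hθ0T (j+1) hj)).sub (hYmeas _ (hθ0T (j+1) hj))).aestronglyMeasurable
    have hm2 : AEStronglyMeasurable (fun ω => X (θ j) ω - Y (θ j) ω) P :=
      ((hXmeas _ (hθ0T j (le_of_lt hj))).sub
        (hYmeas _ (hθ0T j (le_of_lt hj)))).aestronglyMeasurable
    have htri : eLpNorm (fun ω =>
          (X (θ (j+1)) ω - Y (θ (j+1)) ω) - (X (θ j) ω - Y (θ j) ω)) q P
        ≤ eLpNorm (fun ω => X (θ (j+1)) ω - Y (θ (j+1)) ω) q P
          + eLpNorm (fun ω => X (θ j) ω - Y (θ j) ω) q P :=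
      eLpNorm_sub_le hm1 hm2 hq1
    calc ENNReal.ofReal ((t - s) / (θ (j+1) - θ j)) * eLpNorm (fun ω =>
            (X (θ (j+1)) ω - Y (θ (j+1)) ω) - (X (θ j) ω - Y (θ j) ω)) q P
        ≤ ENNReal.ofReal ((t - s) / (θ (j+1) - θ j)) * (A + A) :=
          mul_le_mul_right
            (htri.trans (add_le_add (hA (j+1) hj) (hA j (le_of_lt hj)))) _
      _ ≤ ENNReal.ofReal ((t - s) / δ') * (A + A) := by
          refine mul_le_mul_left (ENNReal.ofReal_le_ofReal ?_) _
          exact div_le_div_of_nonneg_left (by linarith) hδ'pos (hδ'le j hj)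
      _ = ENNReal.ofReal (2 * (t - s) / δ') * A := by
          rw [show 2 * (t - s) / δ' = 2 * ((t - s) / δ') from by ring,
            ENNReal.ofReal_mul (by norm_num : (0:ℝ) ≤ 2), ENNReal.ofReal_ofNat,
            two_mul]
          ring
  -- global Lipschitz bound for the affine part
  have E_Vlip : ∀ n : ℕ, n ≤ K → ∀ s t : ℝ, 0 ≤ s → s ≤ t → t ≤ θ n →
      eLpNorm (fun ω => (W t ω - Z t ω) - (W s ω - Z s ω)) q P
        ≤ ENNReal.ofReal (2 * (t - s) / δ') * A := by
    intro n
    induction n with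
    | zero =>
      intro _ s t hs hst ht
      rw [hθ0] at ht
      have hts : s = t := le_antisymm hst (by linarith)
      subst hts
      simp only [sub_self]
      rw [show (fun _ : Ω => (0:E)) = (0 : Ω → E) from rfl, eLpNorm_zero]
      exact zero_le
    | succ n ih =>
      intro hn1 s t hs hst ht
      have hnK : n < K := hn1
      by_cases hc1 : t ≤ θ n
      · exact ih (by omega) s t hs hst hc1
      · push_neg at hc1
        by_cases hc2 : θ n ≤ s
        · exact E_Vsame n hnK s t ⟨hc2, hst.trans ht⟩ ⟨hc2.trans hst, ht⟩ hst
        · push_neg at hc2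
          have hsplit : (fun ω => (W t ω - Z t ω) - (W s ω - Z s ω))
              = (fun ω => (W t ω - Z t ω) - (W (θ n) ω - Z (θ n) ω))
                + (fun ω => (W (θ n) ω - Z (θ n) ω) - (W s ω - Z s ω)) := by
            funext ω
            simp only [Pi.add_apply]
            abel
          rw [hsplit]
          have htT : t ∈ Set.Icc (0:ℝ) T := ⟨hs.trans hst, ht.trans (hθ0T (n+1) hn1).2⟩
          have hsT : s ∈ Set.Icc (0:ℝ) T := ⟨hs, by linarith [htT.2]⟩
          have hnT : θ n ∈ Set.Icc (0:ℝ) T := hθ0T n (by omega)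
          have hm1 : AEStronglyMeasurable (fun ω =>
              (W t ω - Z t ω) - (W (θ n) ω - Z (θ n) ω)) P :=
            ((smV t htT).sub (smV (θ n) hnT)).aestronglyMeasurable
          have hm2 : AEStronglyMeasurable (fun ω =>
              (W (θ n) ω - Z (θ n) ω) - (W s ω - Z s ω)) P :=
            ((smV (θ n) hnT).sub (smV s hsT)).aestronglyMeasurable
          refine (eLpNorm_add_le hm1 hm2 hq1).trans ?_
          have b1 := E_Vsame n hnK (θ n) t ⟨le_rfl, (hθmono n hnK).le⟩ ⟨hc1.le, ht⟩ hc1.le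
          have b2 := ih (by omega) s (θ n) hs hc2.le le_rfl
          refine (add_le_add b1 b2).trans ?_
          rw [← add_mul, ← ENNReal.ofReal_add
            (div_nonneg (by linarith) hδ'pos.le) (div_nonneg (by linarith) hδ'pos.le),
            show 2 * (t - θ n) / δ' + 2 * (θ n - s) / δ' = 2 * (t - s) / δ' from by ring]
  -- uniform bound for the affine part
  have E_Vbdd : ∀ t ∈ Set.Icc (0:ℝ) T,
      eLpNorm (fun ω => W t ω - Z t ω) q P ≤ A := by
    intro t ht
    obtain ⟨j, hj, h1, h2⟩ := cover t ht
    have hΔp := hΔpos j hj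
    have hl0 : 0 ≤ (θ (j+1) - t) / (θ (j+1) - θ j) := div_nonneg (by linarith) hΔp.le
    have hm0 : 0 ≤ (t - θ j) / (θ (j+1) - θ j) := div_nonneg (by linarith) hΔp.le
    have hsplit : (fun ω => W t ω - Z t ω)
        = (fun ω => ((θ (j+1) - t) / (θ (j+1) - θ j)) • (X (θ j) ω - Y (θ j) ω))
          + (fun ω => ((t - θ j) / (θ (j+1) - θ j)) • (X (θ (j+1)) ω - Y (θ (j+1)) ω)) := by
      funext ω
      simp only [Pi.add_apply]
      rw [hW_eq j hj t ⟨h1, h2⟩ ω, hZ ω j hj t ⟨h1, h2⟩]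
      match_scalars <;> ring
    rw [hsplit]
    have hmm1 : AEStronglyMeasurable
        (fun ω => ((θ (j+1) - t) / (θ (j+1) - θ j)) • (X (θ j) ω - Y (θ j) ω)) P :=
      (((hXmeas _ (hθ0T j (le_of_lt hj))).sub
        (hYmeas _ (hθ0T j (le_of_lt hj)))).const_smul _).aestronglyMeasurable
    have hmm2 : AEStronglyMeasurable
        (fun ω => ((t - θ j) / (θ (j+1) - θ j)) • (X (θ (j+1)) ω - Y (θ (j+1)) ω)) P :=
      (((hXmeas _ (hθ0T (j+1) hj)).sub
        (hYmeas _ (hθ0T (j+1) hj))).const_smul _).aestronglyMeasurable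
    refine (eLpNorm_add_le hmm1 hmm2 hq1).trans ?_
    rw [show (fun ω => ((θ (j+1) - t) / (θ (j+1) - θ j)) • (X (θ j) ω - Y (θ j) ω))
        = ((θ (j+1) - t) / (θ (j+1) - θ j)) • (fun ω => X (θ j) ω - Y (θ j) ω) from rfl,
      show (fun ω => ((t - θ j) / (θ (j+1) - θ j)) • (X (θ (j+1)) ω - Y (θ (j+1)) ω))
        = ((t - θ j) / (θ (j+1) - θ j)) • (fun ω => X (θ (j+1)) ω - Y (θ (j+1)) ω) from rfl,
      eLpNorm_const_smul, eLpNorm_const_smul, Real.enorm_eq_ofReal hl0,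
      Real.enorm_eq_ofReal hm0]
    calc ENNReal.ofReal ((θ (j+1) - t) / (θ (j+1) - θ j))
          * eLpNorm (fun ω => X (θ j) ω - Y (θ j) ω) q P
        + ENNReal.ofReal ((t - θ j) / (θ (j+1) - θ j))
          * eLpNorm (fun ω => X (θ (j+1)) ω - Y (θ (j+1)) ω) q P
        ≤ ENNReal.ofReal ((θ (j+1) - t) / (θ (j+1) - θ j)) * A
          + ENNReal.ofReal ((t - θ j) / (θ (j+1) - θ j)) * A :=
          add_le_add (mul_le_mul_right (hA j (le_of_lt hj)) _)
            (mul_le_mul_right (hA (j+1) hj) _)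
      _ = ENNReal.ofReal ((θ (j+1) - t) / (θ (j+1) - θ j)
            + (t - θ j) / (θ (j+1) - θ j)) * A := by
          rw [ENNReal.ofReal_add hl0 hm0, add_mul]
      _ = A := by
          rw [← add_div, show θ (j+1) - t + (t - θ j) = θ (j+1) - θ j from by ring,
            div_self hΔp.ne', ENNReal.ofReal_one, one_mul]
  -- supremum part
  have hsup : lpSupNorm P T p (fun t ω => X t ω - Z t ω)
      ≤ A + ENNReal.ofReal (2 ^ (-γ) * δ ^ γ) * H := by
    unfold lpSupNorm
    rw [← hqdef]
    refine iSup_le fun t => iSup_le fun ht => ?_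
    show eLpNorm (fun ω => X t ω - Z t ω) q P
      ≤ A + ENNReal.ofReal (2 ^ (-γ) * δ ^ γ) * H
    have hsplit : (fun ω => X t ω - Z t ω)
        = (fun ω => X t ω - W t ω) + (fun ω => W t ω - Z t ω) := by
      funext ω
      simp only [Pi.add_apply]
      abel
    rw [hsplit]
    refine (eLpNorm_add_le ((smG t ht).aestronglyMeasurable)
      ((smV t ht).aestronglyMeasurable) hq1).trans ?_
    calc eLpNorm (fun ω => X t ω - W t ω) q P + eLpNorm (fun ω => W t ω - Z t ω) q P
        ≤ ENNReal.ofReal (2 ^ (-γ) * δ ^ γ) * H + A :=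
          add_le_add (E_Gbdd t ht) (E_Vbdd t ht)
      _ = A + ENNReal.ofReal (2 ^ (-γ) * δ ^ γ) * H := add_comm _ _
  -- key Hölder increment bound
  have key : ∀ u v : ℝ, u ∈ Set.Icc (0:ℝ) T → v ∈ Set.Icc (0:ℝ) T → u < v →
      eLpNorm (fun ω => (X v ω - Z v ω) - (X u ω - Z u ω)) q P
        ≤ (ENNReal.ofReal (2 * δ ^ (1-β) / δ') * A
            + ENNReal.ofReal (2 * δ ^ (γ-β)) * H) * ENNReal.ofReal ((v-u) ^ β) := by
    intro u v hu hv huv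
    have hsplit : (fun ω => (X v ω - Z v ω) - (X u ω - Z u ω))
        = (fun ω => (X v ω - W v ω) - (X u ω - W u ω))
          + (fun ω => (W v ω - Z v ω) - (W u ω - Z u ω)) := by
      funext ω
      simp only [Pi.add_apply]
      abel
    rw [hsplit]
    have hmG : AEStronglyMeasurable
        (fun ω => (X v ω - W v ω) - (X u ω - W u ω)) P :=
      ((smG v hv).sub (smG u hu)).aestronglyMeasurable
    have hmV : AEStronglyMeasurable
        (fun ω => (W v ω - Z v ω) - (W u ω - Z u ω)) P :=
      ((smV v hv).sub (smV u hu)).aestronglyMeasurable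
    refine (eLpNorm_add_le hmG hmV hq1).trans ?_
    have hVpart : eLpNorm (fun ω => (W v ω - Z v ω) - (W u ω - Z u ω)) q P
        ≤ ENNReal.ofReal (2 * δ ^ (1-β) / δ') * A * ENNReal.ofReal ((v-u) ^ β) := by
      by_cases hvd : v - u ≤ δ
      · refine (E_Vlip K le_rfl u v hu.1 huv.le (by rw [hθK]; exact hv.2)).trans ?_
        rw [mul_right_comm, ← ENNReal.ofReal_mul
          (div_nonneg (mul_nonneg (by norm_num) (Real.rpow_nonneg hδpos.le _)) hδ'pos.le)]
        refine mul_le_mul_left (ENNReal.ofReal_le_ofReal ?_) A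
        have hvu : (0:ℝ) < v - u := by linarith
        have h1 : v - u = (v-u) ^ (1-β) * (v-u) ^ β := by
          rw [← Real.rpow_add hvu, show (1:ℝ) - β + β = 1 from by ring, Real.rpow_one]
        have h2 : (v-u) ^ (1-β) ≤ δ ^ (1-β) :=
          Real.rpow_le_rpow hvu.le hvd (by linarith)
        calc 2 * (v - u) / δ' = (2/δ') * ((v-u) ^ (1-β) * (v-u) ^ β) := by
              rw [← h1]; ring
          _ ≤ (2/δ') * (δ ^ (1-β) * (v-u) ^ β) :=
              mul_le_mul_of_nonneg_left
                (mul_le_mul_of_nonneg_right h2 (Real.rpow_nonneg hvu.le β))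
                (div_nonneg (by norm_num) hδ'pos.le)
          _ = 2 * δ ^ (1-β) / δ' * (v-u) ^ β := by ring
      · push_neg at hvd
        have htri : eLpNorm (fun ω => (W v ω - Z v ω) - (W u ω - Z u ω)) q P
            ≤ eLpNorm (fun ω => W v ω - Z v ω) q P
              + eLpNorm (fun ω => W u ω - Z u ω) q P :=
          eLpNorm_sub_le ((smV v hv).aestronglyMeasurable)
            ((smV u hu).aestronglyMeasurable) hq1
        refine htri.trans ?_
        refine (add_le_add (E_Vbdd v hv) (E_Vbdd u hu)).trans ?_
        rw [mul_right_comm, ← ENNReal.ofReal_mul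
          (div_nonneg (mul_nonneg (by norm_num) (Real.rpow_nonneg hδpos.le _)) hδ'pos.le)]
        have hreal : (2:ℝ) ≤ 2 * δ ^ (1-β) / δ' * (v-u) ^ β := by
          calc (2:ℝ) = 2/δ' * δ' := by field_simp
            _ ≤ 2/δ' * (δ ^ (1-β) * (v-u) ^ β) := by
                refine mul_le_mul_of_nonneg_left ?_ (div_nonneg (by norm_num) hδ'pos.le)
                calc δ' ≤ δ := hδ'δ
                  _ = δ ^ (1-β) * δ ^ β := by
                      rw [← Real.rpow_add hδpos, show (1:ℝ) - β + β = 1 from by ring,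
                        Real.rpow_one]
                  _ ≤ δ ^ (1-β) * (v-u) ^ β :=
                      mul_le_mul_of_nonneg_left
                        (Real.rpow_le_rpow hδpos.le hvd.le hβ0)
                        (Real.rpow_nonneg hδpos.le _)
            _ = 2 * δ ^ (1-β) / δ' * (v-u) ^ β := by ring
        calc A + A = 2 * A := (two_mul A).symm
          _ ≤ ENNReal.ofReal (2 * δ ^ (1-β) / δ' * (v-u) ^ β) * A := by
              refine mul_le_mul_left ?_ A
              rw [show (2:ℝ≥0∞) = ENNReal.ofReal 2 from (ENNReal.ofReal_ofNat 2).symm]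
              exact ENNReal.ofReal_le_ofReal hreal
    have hGpart : eLpNorm (fun ω => (X v ω - W v ω) - (X u ω - W u ω)) q P
        ≤ ENNReal.ofReal (2 * δ ^ (γ-β)) * H * ENNReal.ofReal ((v-u) ^ β) := by
      obtain ⟨i, hi, hi1, hi2⟩ := cover u hu
      obtain ⟨j, hj, hj1, hj2⟩ := cover v hv
      by_cases hsame : v ≤ θ (i+1)
      · refine (E_Gsame i hi u v ⟨hi1, hi2⟩ ⟨hi1.trans huv.le, hsame⟩ huv.le).trans ?_
        calc ENNReal.ofReal (2*(v-u)^γ)*H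
            ≤ ENNReal.ofReal (2*δ^(γ-β)*(v-u)^β)*H := by
              refine mul_le_mul_left (ENNReal.ofReal_le_ofReal ?_) H
              have hvu : (0:ℝ) ≤ v - u := by linarith
              have hle : v - u ≤ δ := by
                have h := hΔle i hi
                linarith
              have hkey := rpow_le_rpow_mul hβ0 hγβ hδpos (v-u) hvu hle
              nlinarith [hkey]
          _ = ENNReal.ofReal (2*δ^(γ-β)) * H * ENNReal.ofReal ((v-u)^β) := by
              rw [show 2*δ^(γ-β)*(v-u)^β = (2*δ^(γ-β))*((v-u)^β) from by ring,
                ENNReal.ofReal_mul (mul_nonneg (by norm_num) (Real.rpow_nonneg hδpos.le _)),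
                mul_right_comm]
      · push_neg at hsame
        have hij : i + 1 ≤ j := by
          by_contra hcon
          have hji : j + 1 ≤ i + 1 := by omega
          have hmm := hmono (j+1) (i+1) hji hi
          linarith [hj2]
        have hθij : θ (i+1) ≤ θ j := hmono (i+1) j hij (le_of_lt hj)
        have hsplit2 : (fun ω => (X v ω - W v ω) - (X u ω - W u ω))
            = (fun ω => X v ω - W v ω) + (fun ω => -(X u ω - W u ω)) := by
          funext ω
          simp only [Pi.add_apply]
          abel
        rw [hsplit2]
        have hmg1 : AEStronglyMeasurable (fun ω => X v ω - W v ω) P :=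
          (smG v hv).aestronglyMeasurable
        have hmg2 : AEStronglyMeasurable (fun ω => -(X u ω - W u ω)) P :=
          ((smG u hu).neg).aestronglyMeasurable
        refine (eLpNorm_add_le hmg1 hmg2 hq1).trans ?_
        have hneg : eLpNorm (fun ω => -(X u ω - W u ω)) q P
            = eLpNorm (fun ω => X u ω - W u ω) q P := by
          rw [show (fun ω => -(X u ω - W u ω)) = -(fun ω => X u ω - W u ω) from rfl,
            eLpNorm_neg]
        rw [hneg]
        refine (add_le_add (E_Gpiece j hj v ⟨hj1, hj2⟩)
          (E_Gpiece' i hi u ⟨hi1, hi2⟩)).trans ?_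
        have ha : (0:ℝ) ≤ v - θ j := sub_nonneg.mpr hj1
        have hb : (0:ℝ) ≤ θ (i+1) - u := sub_nonneg.mpr hi2
        have hab : (v - θ j) + (θ (i+1) - u) ≤ v - u := by linarith
        calc ENNReal.ofReal (δ^(γ-β)*(2*(v - θ j))^β)*H
              + ENNReal.ofReal (δ^(γ-β)*(2*(θ (i+1) - u))^β)*H
            = ENNReal.ofReal (δ^(γ-β)*(2*(v - θ j))^β
                + δ^(γ-β)*(2*(θ (i+1) - u))^β) * H := by
              rw [ENNReal.ofReal_add
                (mul_nonneg (Real.rpow_nonneg hδpos.le _)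
                  (Real.rpow_nonneg (by linarith) _))
                (mul_nonneg (Real.rpow_nonneg hδpos.le _)
                  (Real.rpow_nonneg (by linarith) _)), add_mul]
          _ ≤ ENNReal.ofReal (2*δ^(γ-β)*(v-u)^β) * H := by
              refine mul_le_mul_left (ENNReal.ofReal_le_ofReal ?_) H
              have h2r := two_rpow_le hβ0 hβ1
                (mul_nonneg (by norm_num : (0:ℝ) ≤ 2) ha)
                (mul_nonneg (by norm_num : (0:ℝ) ≤ 2) hb)
              have h4 : (2*(v - θ j) + 2*(θ (i+1) - u)) ^ β
                  = 2 ^ β * ((v - θ j) + (θ (i+1) - u)) ^ β := by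
                rw [show 2*(v - θ j)+2*(θ (i+1) - u) = 2*((v - θ j)+(θ (i+1) - u))
                    from by ring,
                  Real.mul_rpow (by norm_num) (by linarith)]
              have h5 : (2:ℝ) ^ (1-β) * 2 ^ β = 2 := by
                rw [← Real.rpow_add (by norm_num), show (1:ℝ) - β + β = 1 from by ring,
                  Real.rpow_one]
              have h6 : ((v - θ j) + (θ (i+1) - u)) ^ β ≤ (v-u) ^ β :=
                Real.rpow_le_rpow (by linarith) hab hβ0
              calc δ ^ (γ-β) * (2*(v - θ j)) ^ β + δ ^ (γ-β) * (2*(θ (i+1) - u)) ^ β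
                  = δ ^ (γ-β) * ((2*(v - θ j)) ^ β + (2*(θ (i+1) - u)) ^ β) := by ring
                _ ≤ δ ^ (γ-β) * (2 ^ (1-β) * (2*(v - θ j) + 2*(θ (i+1) - u)) ^ β) :=
                    mul_le_mul_of_nonneg_left h2r (Real.rpow_nonneg hδpos.le _)
                _ = 2 * (δ ^ (γ-β) * ((v - θ j) + (θ (i+1) - u)) ^ β) := by
                    rw [h4, show (2:ℝ)^(1-β) * (2^β*((v - θ j)+(θ (i+1) - u))^β)
                        = (2^(1-β)*2^β)*((v - θ j)+(θ (i+1) - u))^β from by ring, h5]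
                    ring
                _ ≤ 2 * (δ ^ (γ-β) * (v-u) ^ β) :=
                    mul_le_mul_of_nonneg_left
                      (mul_le_mul_of_nonneg_left h6 (Real.rpow_nonneg hδpos.le _))
                      (by norm_num)
                _ = 2 * δ ^ (γ-β) * (v-u) ^ β := by ring
          _ = ENNReal.ofReal (2*δ^(γ-β)) * H * ENNReal.ofReal ((v-u)^β) := by
              rw [show 2*δ^(γ-β)*(v-u)^β = (2*δ^(γ-β))*((v-u)^β) from by ring,
                ENNReal.ofReal_mul (mul_nonneg (by norm_num) (Real.rpow_nonneg hδpos.le _)),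
                mul_right_comm]
    calc eLpNorm (fun ω => (X v ω - W v ω) - (X u ω - W u ω)) q P
          + eLpNorm (fun ω => (W v ω - Z v ω) - (W u ω - Z u ω)) q P
        ≤ ENNReal.ofReal (2*δ^(γ-β)) * H * ENNReal.ofReal ((v-u)^β)
          + ENNReal.ofReal (2*δ^(1-β)/δ') * A * ENNReal.ofReal ((v-u)^β) :=
          add_le_add hGpart hVpart
      _ = (ENNReal.ofReal (2*δ^(1-β)/δ') * A + ENNReal.ofReal (2*δ^(γ-β)) * H)
          * ENNReal.ofReal ((v-u)^β) := by ring
  -- Hölder seminorm part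
  have hsemi : lpHolderSemi P T p β (fun t ω => X t ω - Z t ω)
      ≤ ENNReal.ofReal (2*δ^(1-β)/δ') * A + ENNReal.ofReal (2*δ^(γ-β)) * H := by
    unfold lpHolderSemi
    rw [← hqdef]
    refine iSup_le fun s => iSup_le fun t => iSup_le fun hs => iSup_le fun ht =>
      iSup_le fun hst => ?_
    rcases lt_or_gt_of_ne hst with h | h
    · show eLpNorm (fun ω => (X s ω - Z s ω) - (X t ω - Z t ω)) q P
          / ENNReal.ofReal (|s - t| ^ β)
        ≤ ENNReal.ofReal (2*δ^(1-β)/δ') * A + ENNReal.ofReal (2*δ^(γ-β)) * H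
      have hneg : (fun ω : Ω => (X s ω - Z s ω) - (X t ω - Z t ω))
          = -(fun ω : Ω => (X t ω - Z t ω) - (X s ω - Z s ω)) := by
        funext ω
        simp only [Pi.neg_apply]
        abel
      rw [hneg, eLpNorm_neg,
        show |s - t| = t - s from by rw [abs_sub_comm]; exact abs_of_pos (by linarith)]
      exact ENNReal.div_le_of_le_mul (key s t hs ht h)
    · show eLpNorm (fun ω => (X s ω - Z s ω) - (X t ω - Z t ω)) q P
          / ENNReal.ofReal (|s - t| ^ β)
        ≤ ENNReal.ofReal (2*δ^(1-β)/δ') * A + ENNReal.ofReal (2*δ^(γ-β)) * H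
      rw [show |s - t| = s - t from abs_of_pos (by linarith)]
      exact ENNReal.div_le_of_le_mul (key t s ht hs h)
  -- conclusion
  unfold lpHolderNorm
  refine (add_le_add hsup hsemi).trans ?_
  have hc1 : ENNReal.ofReal (2 * δ ^ (1-β) / δ' + 1)
      = ENNReal.ofReal (2 * δ ^ (1-β) / δ') + 1 := by
    rw [ENNReal.ofReal_add
      (div_nonneg (mul_nonneg (by norm_num) (Real.rpow_nonneg hδpos.le _)) hδ'pos.le)
      zero_le_one, ENNReal.ofReal_one]
  have hc2 : ENNReal.ofReal ((2 * δ ^ (-β) + 2 ^ (-γ)) * δ ^ γ)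
      = ENNReal.ofReal (2 * δ ^ (γ-β)) + ENNReal.ofReal (2 ^ (-γ) * δ ^ γ) := by
    rw [← ENNReal.ofReal_add
      (mul_nonneg (by norm_num) (Real.rpow_nonneg hδpos.le _))
      (mul_nonneg (Real.rpow_nonneg (by norm_num) _) (Real.rpow_nonneg hδpos.le _))]
    congr 1
    rw [show δ ^ (γ-β) = δ ^ γ * δ ^ (-β) from by
      rw [← Real.rpow_add hδpos]; ring_nf]
    ring
  rw [hc1, hc2, add_mul, add_mul, one_mul]
  apply le_of_eq
  ring
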